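/- Let M : ℝ³ → ℂ, written M(u,x,y), and H : ℝ³ → ℝ, written H(u,x,y), be continuously differentiable. Suppose that for all (u,x,y) ∈ ℝ³: (i) ∂_x(Re M) = 0, ∂_y(Im M) = 0, ∂_x(Im M) = 0, ∂_y(Re M) = 0; (ii) ∂_x M̄ − i·∂_y M̄ = 0 (where M̄ denotes the complex conjugate of M); and (iii) M̄·(∂_x M̄ + i·∂_y M̄) + M·(∂_x M̄ − i·∂_y M̄) − ∂_u M̄ + ∂_xH − i·∂_yH = 0. Then there exist a differentiable function M₀ : ℝ → ℂ and a function h : ℝ → ℝ such that M(u,x,y) = M₀(u) and H(u,x,y) = x·Re(M₀′(u)) + y·Im(M₀′(u)) + h(u) for all (u,x,y); moreover, in this case also ∂_x(Re M) − i·∂_y(Im M) = 0 and ∂_x(Im M) − i·∂_y(Re M) = 0 hold identically, so that all components of the torsion tensor vanish. -/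

import Mathlib

open Complex

private lemma deriv_re_comp' {f : ℝ → ℂ} {x : ℝ} (hf : DifferentiableAt ℝ f x) :
    deriv (fun t => (f t).re) x = (deriv f x).re := by
  simpa [Function.comp_def] using (Complex.reCLM.hasFDerivAt.comp_hasDerivAt x hf.hasDerivAt).deriv

private lemma deriv_im_comp' {f : ℝ → ℂ} {x : ℝ} (hf : DifferentiableAt ℝ f x) :
    deriv (fun t => (f t).im) x = (deriv f x).im := by
  simpa [Function.comp_def] using (Complex.imCLM.hasFDerivAt.comp_hasDerivAt x hf.hasDerivAt).deriv

private lemma deriv_ofReal_comp' {f : ℝ → ℝ} {x : ℝ} (hf : DifferentiableAt ℝ f x) :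
    deriv (fun t => ((f t : ℝ) : ℂ)) x = ((deriv f x : ℝ) : ℂ) := by
  simpa [Function.comp_def] using (Complex.ofRealCLM.hasFDerivAt.comp_hasDerivAt x hf.hasDerivAt).deriv

/-- If the tensor part of the torsion of a teleparallel pp-wave vanishes, the frame
functions reduce to M = M₀(u), H = x·Re M₀′ + y·Im M₀′ + h(u), and the whole torsion
tensor vanishes (Minkowski space). -/
theorem teleparallel_ppwave_vanishing_tensor_part
    (M : ℝ → ℝ → ℝ → ℂ) (H : ℝ → ℝ → ℝ → ℝ)
    (hM : ContDiff ℝ 1 (fun p : ℝ × ℝ × ℝ => M p.1 p.2.1 p.2.2))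
    (hHd : ContDiff ℝ 1 (fun p : ℝ × ℝ × ℝ => H p.1 p.2.1 p.2.2))
    (hi₁ : ∀ u x y : ℝ, deriv (fun x' => (M u x' y).re) x = 0)
    (hi₂ : ∀ u x y : ℝ, deriv (fun y' => (M u x y').im) y = 0)
    (hi₃ : ∀ u x y : ℝ, deriv (fun x' => (M u x' y).im) x = 0)
    (hi₄ : ∀ u x y : ℝ, deriv (fun y' => (M u x y').re) y = 0)
    (hii : ∀ u x y : ℝ,
      deriv (fun x' => (starRingEnd ℂ) (M u x' y)) x
        - Complex.I * deriv (fun y' => (starRingEnd ℂ) (M u x y')) y = 0)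
    (hiii : ∀ u x y : ℝ,
      (starRingEnd ℂ) (M u x y)
          * (deriv (fun x' => (starRingEnd ℂ) (M u x' y)) x
            + Complex.I * deriv (fun y' => (starRingEnd ℂ) (M u x y')) y)
        + M u x y
          * (deriv (fun x' => (starRingEnd ℂ) (M u x' y)) x
            - Complex.I * deriv (fun y' => (starRingEnd ℂ) (M u x y')) y)
        - deriv (fun u' => (starRingEnd ℂ) (M u' x y)) u
        + (deriv (fun x' => H u x' y) x : ℂ)
        - Complex.I * (deriv (fun y' => H u x y') y : ℂ) = 0) :
    ∃ (M₀ : ℝ → ℂ) (h : ℝ → ℝ), Differentiable ℝ M₀ ∧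
      (∀ u x y : ℝ, M u x y = M₀ u) ∧
      (∀ u x y : ℝ,
        H u x y = x * (deriv M₀ u).re + y * (deriv M₀ u).im + h u) ∧
      (∀ u x y : ℝ,
        (deriv (fun x' => (M u x' y).re) x : ℂ)
          - Complex.I * (deriv (fun y' => (M u x y').im) y : ℂ) = 0 ∧
        (deriv (fun x' => (M u x' y).im) x : ℂ)
          - Complex.I * (deriv (fun y' => (M u x y').re) y : ℂ) = 0) := by
  have hMd : Differentiable ℝ (fun p : ℝ × ℝ × ℝ => M p.1 p.2.1 p.2.2) :=
    hM.differentiable one_ne_zero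
  have hHdd : Differentiable ℝ (fun p : ℝ × ℝ × ℝ => H p.1 p.2.1 p.2.2) :=
    hHd.differentiable one_ne_zero
  -- differentiability of the slices
  have hMx : ∀ u y : ℝ, Differentiable ℝ (fun x' => M u x' y) := fun u y =>
    hMd.comp ((differentiable_const u).prodMk (differentiable_id.prodMk (differentiable_const y)))
  have hMy : ∀ u x : ℝ, Differentiable ℝ (fun y' => M u x y') := fun u x =>
    hMd.comp ((differentiable_const u).prodMk ((differentiable_const x).prodMk differentiable_id))
  have hMu : ∀ x y : ℝ, Differentiable ℝ (fun u' => M u' x y) := fun x y =>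
    hMd.comp (differentiable_id.prodMk ((differentiable_const x).prodMk (differentiable_const y)))
  have hHx : ∀ u y : ℝ, Differentiable ℝ (fun x' => H u x' y) := fun u y =>
    hHdd.comp ((differentiable_const u).prodMk (differentiable_id.prodMk (differentiable_const y)))
  have hHy : ∀ u x : ℝ, Differentiable ℝ (fun y' => H u x y') := fun u x =>
    hHdd.comp ((differentiable_const u).prodMk ((differentiable_const x).prodMk differentiable_id))
  -- M is constant in x and y
  have hMxconst : ∀ u y x x' : ℝ, M u x y = M u x' y := by
    intro u y
    apply is_const_of_deriv_eq_zero (hMx u y)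
    intro x
    apply Complex.ext
    · rw [← deriv_re_comp' ((hMx u y) x)]; exact hi₁ u x y
    · rw [← deriv_im_comp' ((hMx u y) x)]; exact hi₃ u x y
  have hMyconst : ∀ u x y y' : ℝ, M u x y = M u x y' := by
    intro u x
    apply is_const_of_deriv_eq_zero (hMy u x)
    intro y
    apply Complex.ext
    · rw [← deriv_re_comp' ((hMy u x) y)]; exact hi₄ u x y
    · rw [← deriv_im_comp' ((hMy u x) y)]; exact hi₂ u x y
  set M₀ : ℝ → ℂ := fun u => M u 0 0 with hM₀def
  have hMconst : ∀ u x y : ℝ, M u x y = M₀ u := by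
    intro u x y
    calc M u x y = M u 0 y := hMxconst u y x 0
    _ = M u 0 0 := hMyconst u 0 y 0
  have hM₀ : Differentiable ℝ M₀ := hMu 0 0
  -- the x- and y-derivatives of conj M vanish
  have hcx : ∀ u x y : ℝ, deriv (fun x' => (starRingEnd ℂ) (M u x' y)) x = 0 := by
    intro u x y
    have : (fun x' => (starRingEnd ℂ) (M u x' y)) = fun _ => (starRingEnd ℂ) (M₀ u) := by
      funext x'; rw [hMconst u x' y]
    rw [this, deriv_const]
  have hcy : ∀ u x y : ℝ, deriv (fun y' => (starRingEnd ℂ) (M u x y')) y = 0 := by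
    intro u x y
    have : (fun y' => (starRingEnd ℂ) (M u x y')) = fun _ => (starRingEnd ℂ) (M₀ u) := by
      funext y'; rw [hMconst u x y']
    rw [this, deriv_const]
  -- the u-derivative of conj M
  have hcu : ∀ u x y : ℝ,
      deriv (fun u' => (starRingEnd ℂ) (M u' x y)) u = star (deriv M₀ u) := by
    intro u x y
    have heq : (fun u' => (starRingEnd ℂ) (M u' x y)) = fun u' => star (M₀ u') := by
      funext u'; rw [hMconst u' x y]; rfl
    rw [heq]
    exact ((hM₀ u).hasDerivAt.star).deriv
  -- extract the partial derivatives of H from (iii)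
  have hHxval : ∀ u x y : ℝ, deriv (fun x' => H u x' y) x = (deriv M₀ u).re := by
    intro u x y
    have h3 := hiii u x y
    rw [hcx u x y, hcy u x y, hcu u x y,
      deriv_ofReal_comp' ((hHx u y) x), deriv_ofReal_comp' ((hHy u x) y)] at h3
    have h3' : ((deriv (fun x' => H u x' y) x : ℝ) : ℂ)
        - Complex.I * ((deriv (fun y' => H u x y') y : ℝ) : ℂ) = star (deriv M₀ u) := by
      linear_combination h3
    have := congrArg Complex.re h3'
    simpa using this
  have hHyval : ∀ u x y : ℝ, deriv (fun y' => H u x y') y = (deriv M₀ u).im := by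
    intro u x y
    have h3 := hiii u x y
    rw [hcx u x y, hcy u x y, hcu u x y,
      deriv_ofReal_comp' ((hHx u y) x), deriv_ofReal_comp' ((hHy u x) y)] at h3
    have h3' : ((deriv (fun x' => H u x' y) x : ℝ) : ℂ)
        - Complex.I * ((deriv (fun y' => H u x y') y : ℝ) : ℂ) = star (deriv M₀ u) := by
      linear_combination h3
    have := congrArg Complex.im h3'
    simp only [Complex.sub_im, Complex.ofReal_im, Complex.mul_im, Complex.I_re,
      Complex.ofReal_re, Complex.I_im, Complex.ofReal_im] at this
    have him : (star (deriv M₀ u)).im = -(deriv M₀ u).im := rfl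
    rw [him] at this
    linarith
  -- integrate in x and y
  refine ⟨M₀, fun u => H u 0 0, hM₀, hMconst, ?_, ?_⟩
  · intro u x y
    have hx : ∀ x x' : ℝ, H u x y - x * (deriv M₀ u).re = H u x' y - x' * (deriv M₀ u).re := by
      apply is_const_of_deriv_eq_zero
      · exact (hHx u y).sub (differentiable_id.mul (differentiable_const _))
      · intro x
        have h1 : HasDerivAt (fun x' => H u x' y) ((deriv M₀ u).re) x := by
          rw [← hHxval u x y]; exact ((hHx u y) x).hasDerivAt
        have h2 : HasDerivAt (fun x' : ℝ => x' * (deriv M₀ u).re) ((deriv M₀ u).re) x := by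
          simpa using (hasDerivAt_id x).mul_const ((deriv M₀ u).re)
        have := (h1.sub h2).deriv
        simpa [Pi.sub_def] using this
    have hy : ∀ y y' : ℝ, H u 0 y - y * (deriv M₀ u).im = H u 0 y' - y' * (deriv M₀ u).im := by
      apply is_const_of_deriv_eq_zero
      · exact (hHy u 0).sub (differentiable_id.mul (differentiable_const _))
      · intro y
        have h1 : HasDerivAt (fun y' => H u 0 y') ((deriv M₀ u).im) y := by
          rw [← hHyval u 0 y]; exact ((hHy u 0) y).hasDerivAt
        have h2 : HasDerivAt (fun y' : ℝ => y' * (deriv M₀ u).im) ((deriv M₀ u).im) y := by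
          simpa using (hasDerivAt_id y).mul_const ((deriv M₀ u).im)
        have := (h1.sub h2).deriv
        simpa [Pi.sub_def] using this
    have h1 := hx x 0
    have h2 := hy y 0
    simp only [zero_mul, sub_zero] at h1 h2
    linarith
  · intro u x y
    have e1 : (fun x' => ((M u x' y).re : ℂ)) = fun _ => ((M₀ u).re : ℂ) := by
      funext x'; rw [hMconst u x' y]
    have e2 : (fun y' => ((M u x y').im : ℂ)) = fun _ => ((M₀ u).im : ℂ) := by
      funext y'; rw [hMconst u x y']
    have e3 : (fun x' => ((M u x' y).im : ℂ)) = fun _ => ((M₀ u).im : ℂ) := by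
      funext x'; rw [hMconst u x' y]
    have e4 : (fun y' => ((M u x y').re : ℂ)) = fun _ => ((M₀ u).re : ℂ) := by
      funext y'; rw [hMconst u x y']
    rw [e1, e2, e3, e4, deriv_const, deriv_const]
    norm_num
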